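/- Fix p, q > 0, d > 0, k > 0. Let ρ(x;σ) = (1/(2σ)) e^{-|x|/σ} be the Laplace density with scale σ, and let l = d/(k+1) + (kσ/(k+1)) log(kp/q), so that p ρ(l;σ) = q ρ(d-l; kσ). Then lim_{σ→0⁺} [∫_0^d dx / (p ρ(x;σ) + q ρ(d-x;kσ))] / [(2σ²/p) e^{l/σ}] = ∫_0^∞ dy/(1 + y^{(k+1)/k}). -/

import Mathlib

open MeasureTheory Real Filter

/-- The Laplace density with scale `σ`. -/
noncomputable def laplacePDF (σ x : ℝ) : ℝ := (1 / (2 * σ)) * Real.exp (-|x| / σ)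

lemma laplace_aux_contOn_f {r : ℝ} :
    ContinuousOn (fun u : ℝ => 1 / (1 + u ^ r)) (Set.Ioi 0) := by
  apply ContinuousOn.div continuousOn_const
  · exact continuousOn_const.add fun u hu =>
      (Real.continuousAt_rpow_const u r (Or.inl (ne_of_gt hu))).continuousWithinAt
  · intro u hu
    have : (0:ℝ) < u ^ r := Real.rpow_pos_of_pos hu r
    positivity

lemma laplace_aux_integrableOn_f {r : ℝ} (hr : 1 < r) :
    IntegrableOn (fun u : ℝ => 1 / (1 + u ^ r)) (Set.Ioi 0) := by
  have hmeas : Measurable (fun u : ℝ => 1 / (1 + u ^ r)) := by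
    have : Measurable (fun u : ℝ => u ^ r) :=
      (Real.continuous_rpow_const (by linarith)).measurable
    exact measurable_const.div (measurable_const.add this)
  have h01 : IntegrableOn (fun u : ℝ => 1 / (1 + u ^ r)) (Set.Ioc 0 1) := by
    apply Measure.integrableOn_of_bounded (M := 1) (by simp) hmeas.aestronglyMeasurable
    filter_upwards [ae_restrict_mem measurableSet_Ioc] with u hu
    have h1 : (0:ℝ) ≤ u ^ r := Real.rpow_nonneg hu.1.le r
    rw [Real.norm_eq_abs, abs_of_nonneg (by positivity)]
    rw [div_le_one (by positivity)]
    linarith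
  have h1i : IntegrableOn (fun u : ℝ => 1 / (1 + u ^ r)) (Set.Ioi 1) := by
    apply Integrable.mono (integrableOn_Ioi_rpow_of_lt (by linarith : -r < -1) one_pos)
      hmeas.aestronglyMeasurable
    filter_upwards [ae_restrict_mem measurableSet_Ioi] with u hu
    have hu0 : (0:ℝ) < u := lt_trans one_pos hu
    have h1 : (0:ℝ) < u ^ r := Real.rpow_pos_of_pos hu0 r
    rw [Real.norm_eq_abs, Real.norm_eq_abs, abs_of_nonneg (by positivity),
      abs_of_nonneg (Real.rpow_nonneg hu0.le _), Real.rpow_neg hu0.le,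
      div_le_iff₀ (by positivity), inv_mul_eq_div, le_div_iff₀ h1]
    nlinarith
  rw [← Set.Ioc_union_Ioi_eq_Ioi (zero_le_one)]
  exact h01.union h1i

lemma laplace_aux_alg (p q k σ B E L0 Er : ℝ) (hp : 0 < p) (hq : 0 < q) (hk : 0 < k)
    (hσ : 0 < σ) (hB : 0 < B) (hE : 0 < E) (hL0 : 0 < L0)
    (hR : Er = q / (k * p) * (B * (E * L0))) :
    1 / (p * (1 / (2 * σ) * (E * L0)⁻¹) + q * (1 / (2 * (k * σ)) * B)) =
      2 * σ ^ 2 / p * L0 * (E * (1 / σ) * (1 / (1 + Er))) := by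
  subst hR
  have h1 : (0:ℝ) < p * (1 / (2 * σ) * (E * L0)⁻¹) + q * (1 / (2 * (k * σ)) * B) := by
    positivity
  have h2 : (0:ℝ) < 1 + q / (k * p) * (B * (E * L0)) := by positivity
  rw [div_eq_iff h1.ne', mul_comm]
  field_simp

lemma laplace_aux_step1 (p q d k : ℝ) (hp : 0 < p) (hq : 0 < q) (hd : 0 < d) (hk : 0 < k)
    {σ : ℝ} (hσ : 0 < σ) :
    (∫ x in (0:ℝ)..d, 1 / (p * laplacePDF σ x + q * laplacePDF (k * σ) (d - x))) /
        ((2 * σ ^ 2 / p) *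
          Real.exp ((d / (k + 1) + (k * σ / (k + 1)) * Real.log (k * p / q)) / σ)) =
      ∫ u in (Real.exp ((0 - (d / (k + 1) + (k * σ / (k + 1)) * Real.log (k * p / q))) / σ))..(
        Real.exp ((d - (d / (k + 1) + (k * σ / (k + 1)) * Real.log (k * p / q))) / σ)),
        1 / (1 + u ^ ((k + 1) / k)) := by
  set L : ℝ := Real.log (k * p / q) with hL
  set l : ℝ := d / (k + 1) + (k * σ / (k + 1)) * L with hl
  set r : ℝ := (k + 1) / k with hrdef
  have hk1 : (0:ℝ) < k + 1 := by linarith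
  have hσ' : σ ≠ 0 := ne_of_gt hσ
  have hC0 : (2 * σ ^ 2 / p) * Real.exp (l / σ) ≠ 0 := by positivity
  have hg : ∀ x ∈ Set.uIcc (0:ℝ) d, HasDerivAt (fun x => Real.exp ((x - l) / σ))
      (Real.exp ((x - l) / σ) * (1 / σ)) x := by
    intro x _
    have h1 : HasDerivAt (fun x : ℝ => (x - l) / σ) (1 / σ) x := by
      simpa using (((hasDerivAt_id x).sub_const l).div_const σ)
    exact h1.exp
  have himg : (fun x => Real.exp ((x - l) / σ)) '' Set.uIcc (0:ℝ) d ⊆ Set.Ioi 0 := by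
    rintro _ ⟨x, -, rfl⟩; exact Real.exp_pos _
  have hsub := intervalIntegral.integral_comp_smul_deriv' (f := fun x => Real.exp ((x - l) / σ))
    (f' := fun x => Real.exp ((x - l) / σ) * (1 / σ))
    (g := fun u : ℝ => 1 / (1 + u ^ r)) hg
    ((Real.continuous_exp.comp (by continuity)).continuousOn.mul continuousOn_const)
    (laplace_aux_contOn_f.mono himg)
  simp only at hsub
  have hpt : ∀ x ∈ Set.uIcc (0:ℝ) d,
      1 / (p * laplacePDF σ x + q * laplacePDF (k * σ) (d - x)) =
      ((2 * σ ^ 2 / p) * Real.exp (l / σ)) * ((Real.exp ((x - l) / σ) * (1 / σ)) •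
        ((fun u : ℝ => 1 / (1 + u ^ r)) ∘ fun x => Real.exp ((x - l) / σ)) x) := by
    intro x hx
    rw [Set.uIcc_of_le hd.le] at hx
    obtain ⟨hx0, hxd⟩ := hx
    have habs1 : |x| = x := abs_of_nonneg hx0
    have habs2 : |d - x| = d - x := abs_of_nonneg (by linarith)
    simp only [laplacePDF, habs1, habs2, Function.comp, smul_eq_mul]
    have hAEL : Real.exp (-x / σ) = (Real.exp ((x - l) / σ) * Real.exp (l / σ))⁻¹ := by
      rw [← Real.exp_add, ← Real.exp_neg]
      congr 1
      field_simp
      ring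
    have hR : (Real.exp ((x - l) / σ)) ^ r = q / (k * p) *
        (Real.exp (-(d - x) / (k * σ)) * (Real.exp ((x - l) / σ) * Real.exp (l / σ))) := by
      rw [← Real.exp_log (show (0:ℝ) < q / (k * p) by positivity),
        Real.rpow_def_of_pos (Real.exp_pos _), Real.log_exp, ← Real.exp_add, ← Real.exp_add,
        ← Real.exp_add]
      congr 1
      have hlog : Real.log (q / (k * p)) = -L := by
        rw [hL, ← Real.log_inv]
        congr 1
        field_simp
      rw [hlog, hl, hrdef]
      field_simp [hk.ne', hσ', hk1.ne']
      ring
    rw [hAEL, hR]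
    exact laplace_aux_alg p q k σ _ _ _ _ hp hq hk hσ (Real.exp_pos _) (Real.exp_pos _)
      (Real.exp_pos _) rfl
  rw [intervalIntegral.integral_congr hpt, intervalIntegral.integral_const_mul, hsub,
    mul_div_cancel_left₀ _ hC0]

theorem laplace_scaling_limit (p q d k : ℝ) (hp : 0 < p) (hq : 0 < q)
    (hd : 0 < d) (hk : 0 < k) :
    Tendsto
      (fun σ : ℝ =>
        (∫ x in (0 : ℝ)..d, 1 / (p * laplacePDF σ x + q * laplacePDF (k * σ) (d - x))) /
          ((2 * σ ^ 2 / p) *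
            Real.exp ((d / (k + 1) + (k * σ / (k + 1)) * Real.log (k * p / q)) / σ)))
      (nhdsWithin 0 (Set.Ioi 0))
      (nhds (∫ y in Set.Ioi (0 : ℝ), 1 / (1 + y ^ ((k + 1) / k)))) := by
  have hk1 : (0:ℝ) < k + 1 := by linarith
  set L : ℝ := Real.log (k * p / q) with hL
  set r : ℝ := (k + 1) / k with hrdef
  have hr : 1 < r := by rw [hrdef, lt_div_iff₀ hk]; linarith
  set f : ℝ → ℝ := fun u => 1 / (1 + u ^ r) with hf
  set lf : ℝ → ℝ := fun σ => d / (k + 1) + (k * σ / (k + 1)) * L with hlf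
  set af : ℝ → ℝ := fun σ => Real.exp ((0 - lf σ) / σ) with haf
  set bf : ℝ → ℝ := fun σ => Real.exp ((d - lf σ) / σ) with hbf
  have hint : IntegrableOn f (Set.Ioi 0) := laplace_aux_integrableOn_f hr
  have hinv : Tendsto (fun σ : ℝ => σ⁻¹) (nhdsWithin 0 (Set.Ioi 0)) atTop :=
    tendsto_inv_nhdsGT_zero
  have ha : Tendsto af (nhdsWithin 0 (Set.Ioi 0)) (nhds 0) := by
    apply Real.tendsto_exp_atBot.comp
    apply Tendsto.congr' (f₁ := fun σ : ℝ => -(d / (k + 1) * σ⁻¹) + (-(k / (k + 1) * L)))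
    · filter_upwards [self_mem_nhdsWithin] with σ (hσ : (0:ℝ) < σ)
      rw [hlf]
      field_simp
      ring
    · exact tendsto_atBot_add_const_right _ _
        (tendsto_neg_atBot_iff.mpr (hinv.const_mul_atTop (by positivity)))
  have hb : Tendsto bf (nhdsWithin 0 (Set.Ioi 0)) atTop := by
    apply Real.tendsto_exp_atTop.comp
    apply Tendsto.congr' (f₁ := fun σ : ℝ => k * d / (k + 1) * σ⁻¹ + (-(k / (k + 1) * L)))
    · filter_upwards [self_mem_nhdsWithin] with σ (hσ : (0:ℝ) < σ)
      rw [hlf]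
      field_simp
      ring
    · exact tendsto_atTop_add_const_right _ _ (hinv.const_mul_atTop (by positivity))
  have hii : ∀ x : ℝ, 0 < x → IntervalIntegrable f volume 0 x := by
    intro x hx
    rw [intervalIntegrable_iff_integrableOn_Ioc_of_le hx.le]
    exact hint.mono_set Set.Ioc_subset_Ioi_self
  have hT1 : Tendsto (fun σ => ∫ u in (0:ℝ)..(bf σ), f u) (nhdsWithin 0 (Set.Ioi 0))
      (nhds (∫ y in Set.Ioi (0:ℝ), f y)) :=
    intervalIntegral_tendsto_integral_Ioi 0 hint hb
  have hT2 : Tendsto (fun σ => ∫ u in (0:ℝ)..(af σ), f u) (nhdsWithin 0 (Set.Ioi 0))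
      (nhds 0) := by
    have hbound : ∀ᶠ σ in nhdsWithin 0 (Set.Ioi 0),
        (∫ u in (0:ℝ)..(af σ), f u) ≤ af σ ∧ 0 ≤ ∫ u in (0:ℝ)..(af σ), f u := by
      filter_upwards [self_mem_nhdsWithin] with σ (hσ : (0:ℝ) < σ)
      have hap : 0 < af σ := Real.exp_pos _
      have hfn : ∀ u ∈ Set.Icc (0:ℝ) (af σ), 0 ≤ f u := by
        intro u hu
        have h1 : (0:ℝ) ≤ u ^ r := Real.rpow_nonneg hu.1 r
        rw [hf]
        positivity
      constructor
      · have := intervalIntegral.integral_mono_on hap.le (hii _ hap)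
          (intervalIntegrable_const (c := (1:ℝ)))
          (fun u hu => by
            have h1 : (0:ℝ) ≤ u ^ r := Real.rpow_nonneg hu.1 r
            rw [hf]
            rw [div_le_one (by positivity)]
            linarith)
        simpa using this
      · exact intervalIntegral.integral_nonneg hap.le hfn
    exact tendsto_of_tendsto_of_tendsto_of_le_of_le'
      (tendsto_const_nhds (x := (0:ℝ))) ha
      (hbound.mono fun σ h => h.2) (hbound.mono fun σ h => h.1)
  have hS : Tendsto (fun σ => ∫ u in (af σ)..(bf σ), f u) (nhdsWithin 0 (Set.Ioi 0))
      (nhds (∫ y in Set.Ioi (0:ℝ), f y)) := by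
    apply Tendsto.congr' (f₁ := fun σ => (∫ u in (0:ℝ)..(bf σ), f u) - ∫ u in (0:ℝ)..(af σ), f u)
    · filter_upwards [self_mem_nhdsWithin] with σ (hσ : (0:ℝ) < σ)
      exact intervalIntegral.integral_interval_sub_left (hii _ (Real.exp_pos _))
        (hii _ (Real.exp_pos _))
    · simpa using hT1.sub hT2
  apply hS.congr'
  filter_upwards [self_mem_nhdsWithin] with σ (hσ : (0:ℝ) < σ)
  exact (laplace_aux_step1 p q d k hp hq hd hk hσ).symm
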